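/- Let X be an N-dimensional random variable with positive Rényi information dimension d(X), let g be measurable and Y = g(X). If the conditional information dimension d(X|Y=y) exists and is finite for P_Y-almost every y, then the relative information loss exists and equals l(X→Y) = d(X|Y) / d(X), where d(X|Y) = ∫_𝒴 d(X|Y=y) dP_Y(y). -/

import Mathlib

open MeasureTheory ProbabilityTheory Filter Set
open scoped ENNReal Topology

noncomputable section

/-- Base-2 entropy of the discrete (atomic) part of a measure. -/
def pmfEntropy {β : Type*} [MeasurableSpace β] (ν : Measure β) : ℝ≥0∞ :=
  ∑' b : β, ENNReal.ofReal (-((ν {b}).toReal * Real.logb 2 (ν {b}).toReal))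

/-- Conditional entropy `H(X | Y)` (of a discretely supported `X`) given `Y`,
computed through the regular conditional distribution of `X` given `Y`. -/
def condEnt {α β γ : Type*} [MeasurableSpace α] [MeasurableSpace β] [StandardBorelSpace β]
    [Nonempty β] [MeasurableSpace γ] (μ : Measure α) [IsFiniteMeasure μ]
    (X : α → β) (Y : α → γ) : ℝ≥0∞ :=
  ∫⁻ y, pmfEntropy (condDistrib X Y μ y) ∂(μ.map Y)

/-- Componentwise uniform quantization `X̂ₙ = ⌊2ⁿ X⌋ / 2ⁿ`. -/
def quant {ι : Type*} (n : ℕ) (x : ι → ℝ) : ι → ℝ :=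
  fun i => (⌊(2 : ℝ) ^ n * x i⌋ : ℝ) / (2 : ℝ) ^ n

/-- `H(X̂ₙ)`, entropy of the quantized input. -/
def entQ {α ι : Type*} [MeasurableSpace α] [Fintype ι] (μ : Measure α)
    (X : α → ι → ℝ) (n : ℕ) : ℝ≥0∞ :=
  pmfEntropy (μ.map fun a => quant n (X a))

/-- `H(X̂ₙ | Y)`. -/
def condEntQ {α ι γ : Type*} [MeasurableSpace α] [Fintype ι] [MeasurableSpace γ]
    (μ : Measure α) [IsFiniteMeasure μ] (X : α → ι → ℝ) (Y : α → γ) (n : ℕ) : ℝ≥0∞ :=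
  condEnt μ (fun a => quant n (X a)) Y

/-- Information loss `L(X→Y) = H(X|Y) = limₙ H(X̂ₙ|Y)`; since the sequence
`H(X̂ₙ|Y)` is nondecreasing in `n` the limit equals the supremum. -/
def infoLoss {α ι γ : Type*} [MeasurableSpace α] [Fintype ι] [MeasurableSpace γ]
    (μ : Measure α) [IsFiniteMeasure μ] (X : α → ι → ℝ) (Y : α → γ) : ℝ≥0∞ :=
  ⨆ n : ℕ, condEntQ μ X Y n

/-- The sequence `H(X̂ₙ|Y)/H(X̂ₙ)` whose limit is the relative information loss. -/
def relLossSeq {α ι γ : Type*} [MeasurableSpace α] [Fintype ι] [MeasurableSpace γ]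
    (μ : Measure α) [IsFiniteMeasure μ] (X : α → ι → ℝ) (Y : α → γ) (n : ℕ) : ℝ :=
  (condEntQ μ X Y n).toReal / (entQ μ X n).toReal

/-- The sequence `I(X̂ₙ;Y)/H(X̂ₙ) = (H(X̂ₙ) - H(X̂ₙ|Y))/H(X̂ₙ)` whose limit is the
relative information transfer. -/
def relTransSeq {α ι γ : Type*} [MeasurableSpace α] [Fintype ι] [MeasurableSpace γ]
    (μ : Measure α) [IsFiniteMeasure μ] (X : α → ι → ℝ) (Y : α → γ) (n : ℕ) : ℝ :=
  ((entQ μ X n).toReal - (condEntQ μ X Y n).toReal) / (entQ μ X n).toReal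

/-- `H(ν̂ₙ)` for a measure on `ℝᴺ` (quantized entropy of a distribution). -/
def entQM {ι : Type*} [Fintype ι] (ν : Measure (ι → ℝ)) (n : ℕ) : ℝ≥0∞ :=
  pmfEntropy (ν.map (quant n))


section AuxEntropy

/-- entropy term -/
def eTerm (p : ℝ≥0∞) : ℝ≥0∞ := ENNReal.ofReal ((Real.log 2)⁻¹ * Real.negMulLog p.toReal)

lemma eTerm_zero : eTerm 0 = 0 := by simp [eTerm]

lemma pmfEntropy_eq {β : Type*} [MeasurableSpace β] (ν : Measure β) :
    pmfEntropy ν = ∑' b : β, eTerm (ν {b}) := by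
  unfold pmfEntropy eTerm
  congr 1; ext b; congr 1
  rw [Real.logb, Real.negMulLog]
  field_simp

lemma pmfEntropy_eq_tsum_subtype {β : Type*} [MeasurableSpace β] (ν : Measure β)
    (S : Set β) (h : ∀ b ∉ S, ν {b} = 0) :
    pmfEntropy ν = ∑' b : S, eTerm (ν {(b:β)}) := by
  rw [pmfEntropy_eq]
  refine (tsum_subtype_eq_of_support_subset ?_).symm
  intro b hb
  by_contra hbS
  rw [Function.mem_support] at hb
  exact hb (by rw [h b hbS]; exact eTerm_zero)

lemma negMulLog_le_one {x : ℝ} (h0 : 0 ≤ x) (h1 : x ≤ 1) : Real.negMulLog x ≤ 1 := by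
  rcases eq_or_lt_of_le h0 with h | h
  · simp [← h]
  · have hlog : Real.log x⁻¹ ≤ x⁻¹ - 1 := Real.log_le_sub_one_of_pos (by positivity)
    have : Real.negMulLog x = x * Real.log x⁻¹ := by
      rw [Real.log_inv, Real.negMulLog]; ring
    rw [this]
    calc x * Real.log x⁻¹ ≤ x * (x⁻¹ - 1) := by
          exact mul_le_mul_of_nonneg_left hlog h0
      _ = 1 - x := by field_simp
      _ ≤ 1 := by linarith

lemma int_floor_div (a : ℝ) (c : ℕ) (hc : 0 < c) : ⌊a / (c:ℝ)⌋ = ⌊a⌋ / (c:ℤ) := by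
  have hc' : (0:ℝ) < c := by exact_mod_cast hc
  have hcz : (0:ℤ) < c := by exact_mod_cast hc
  rw [Int.floor_eq_iff]
  constructor
  · rw [le_div_iff₀ hc']
    have h1 : ((⌊a⌋ / (c:ℤ)) * c : ℤ) ≤ ⌊a⌋ := Int.ediv_mul_le _ (by exact_mod_cast hc.ne')
    calc ((⌊a⌋ / (c:ℤ) : ℤ):ℝ) * c = (((⌊a⌋ / (c:ℤ)) * c : ℤ) : ℝ) := by push_cast; ring
      _ ≤ (⌊a⌋ : ℝ) := by exact_mod_cast h1
      _ ≤ a := Int.floor_le a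
  · rw [div_lt_iff₀ hc']
    have h2 : ⌊a⌋ < (⌊a⌋ / (c:ℤ) + 1) * c := Int.lt_ediv_add_one_mul_self _ hcz
    calc a < (⌊a⌋ : ℝ) + 1 := Int.lt_floor_add_one a
      _ ≤ ((⌊a⌋ / (c:ℤ) + 1) * c : ℤ) := by
          have : ⌊a⌋ + 1 ≤ (⌊a⌋ / (c:ℤ) + 1) * c := h2
          exact_mod_cast this
      _ = ((⌊a⌋ / (c:ℤ) : ℤ) + 1 : ℝ) * c := by push_cast; ring


set_option linter.unusedSectionVars false


variable {ι : Type*} [Fintype ι]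

lemma measurable_quant (n : ℕ) : Measurable (quant (ι := ι) n) := by
  apply measurable_pi_lambda
  intro i
  have h1 : Measurable fun v : ι → ℝ => ⌊(2:ℝ)^n * v i⌋ :=
    ((measurable_pi_apply i).const_mul _).floor
  exact (measurable_from_top (f := fun k : ℤ => (k : ℝ) / (2:ℝ)^n)).comp h1

/-- the dyadic grid at level `n` -/
def grid (ι : Type*) (n : ℕ) : Set (ι → ℝ) :=
  univ.pi fun _ => range fun k : ℤ => (k : ℝ) / 2 ^ n

lemma countable_grid (n : ℕ) : (grid ι n).Countable :=
  countable_univ_pi fun _ => countable_range _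

lemma quant_mem_grid (n : ℕ) (x : ι → ℝ) : quant n x ∈ grid ι n := by
  intro i _
  exact ⟨⌊(2:ℝ)^n * x i⌋, rfl⟩

/-- coarsening map from level `n` to level `m ≤ n` -/
def coarse (ι : Type*) (n m : ℕ) : (ι → ℝ) → (ι → ℝ) :=
  fun v i => ((⌊(2:ℝ)^n * v i⌋ / (2 ^ (n - m) : ℤ) : ℤ) : ℝ) / (2:ℝ) ^ m

lemma measurable_coarse (n m : ℕ) : Measurable (coarse ι n m) := by
  apply measurable_pi_lambda
  intro i
  have h1 : Measurable fun v : ι → ℝ => ⌊(2:ℝ)^n * v i⌋ :=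
    ((measurable_pi_apply i).const_mul _).floor
  exact (measurable_from_top
    (f := fun k : ℤ => ((k / (2 ^ (n - m) : ℤ) : ℤ) : ℝ) / (2:ℝ)^m)).comp h1

lemma coarse_comp_quant {n m : ℕ} (h : m ≤ n) :
    (coarse ι n m) ∘ (quant (ι := ι) n) = quant m := by
  funext x i
  simp only [Function.comp_apply, coarse, quant]
  have h2n : ((2:ℝ)^n) ≠ 0 := by positivity
  have hfl : (2:ℝ)^n * ((⌊(2 : ℝ) ^ n * x i⌋ : ℝ) / (2:ℝ)^n) = (⌊(2 : ℝ) ^ n * x i⌋ : ℝ) := by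
    field_simp
  rw [hfl, Int.floor_intCast]
  congr 1
  have key : ⌊(2:ℝ)^m * x i⌋ = ⌊(2:ℝ)^n * x i⌋ / (2 ^ (n - m) : ℤ) := by
    have : (2:ℝ)^m * x i = ((2:ℝ)^n * x i) / ((2^(n-m) : ℕ) : ℝ) := by
      rw [Nat.cast_pow]
      push_cast
      rw [eq_div_iff (by positivity)]
      have hexp : (2:ℝ)^(n-m) * 2^m = 2^n := by rw [← pow_add]; congr 1; omega
      linear_combination x i * hexp
    rw [this, int_floor_div _ _ (by positivity)]
    congr 1
  rw [← key]


lemma grid_floor {n : ℕ} {v : ι → ℝ} (hv : v ∈ grid ι n) (i : ι) :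
    ((⌊(2:ℝ)^n * v i⌋ : ℝ)) / (2:ℝ)^n = v i := by
  obtain ⟨k, hk⟩ := hv i (mem_univ i)
  change (k:ℝ) / 2^n = v i at hk
  rw [← hk]
  have : (2:ℝ)^n * ((k:ℝ)/2^n) = k := by field_simp
  rw [this, Int.floor_intCast]

lemma grid_fiber_finite_card (n m : ℕ) (t : ι → ℝ) :
    (grid ι n ∩ coarse ι n m ⁻¹' {t}).Finite ∧
    (grid ι n ∩ coarse ι n m ⁻¹' {t}).ncard ≤ 2 ^ ((n - m) * Fintype.card ι) := by
  haveI : DecidableEq ι := Classical.decEq ι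
  set c : ℕ := 2 ^ (n - m) with hc
  have hc0 : (0:ℤ) < (c:ℤ) := by positivity
  set F := grid ι n ∩ coarse ι n m ⁻¹' {t} with hF
  set ψ : (ι → ℝ) → (ι → Fin c) := fun v i =>
    ⟨(⌊(2:ℝ)^n * v i⌋ % (c:ℤ)).toNat, by
      rw [Int.toNat_lt (Int.emod_nonneg _ hc0.ne')]
      exact Int.emod_lt_of_pos _ hc0⟩ with hψ
  have hinj : F.InjOn ψ := by
    intro v hv w hw hvw
    funext i
    have hfl : ∀ u ∈ F, ((⌊(2:ℝ)^n * u i⌋ : ℝ)) / (2:ℝ)^n = u i := fun u hu => grid_floor hu.1 i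
    -- coarse values agree
    have hcoarse : coarse ι n m v = coarse ι n m w := by
      rw [hv.2, hw.2]
    have hdiv : ⌊(2:ℝ)^n * v i⌋ / (c:ℤ) = ⌊(2:ℝ)^n * w i⌋ / (c:ℤ) := by
      have := congrFun hcoarse i
      simp only [coarse] at this
      have h2 : ((2:ℝ)^m) ≠ 0 := by positivity
      field_simp at this
      exact_mod_cast this
    have hmod : ⌊(2:ℝ)^n * v i⌋ % (c:ℤ) = ⌊(2:ℝ)^n * w i⌋ % (c:ℤ) := by
      have := congrFun hvw i
      simp only [ψ, Fin.mk.injEq] at this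
      have h1 := Int.emod_nonneg ⌊(2:ℝ)^n * v i⌋ hc0.ne'
      have h2 := Int.emod_nonneg ⌊(2:ℝ)^n * w i⌋ hc0.ne'
      omega
    have : ⌊(2:ℝ)^n * v i⌋ = ⌊(2:ℝ)^n * w i⌋ := by
      have e2 := Int.mul_ediv_add_emod ⌊(2:ℝ)^n * w i⌋ (c:ℤ)
      rw [← Int.mul_ediv_add_emod ⌊(2:ℝ)^n * v i⌋ (c:ℤ), hdiv, hmod]
      exact e2
    rw [← hfl v hv, ← hfl w hw, this]
  have hfin : F.Finite := Set.Finite.of_finite_image (Set.toFinite _) hinj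
  refine ⟨hfin, ?_⟩
  calc F.ncard = (ψ '' F).ncard := (Set.ncard_image_of_injOn hinj).symm
    _ ≤ (Set.univ : Set (ι → Fin c)).ncard := Set.ncard_le_ncard (subset_univ _) (Set.toFinite _)
    _ = Fintype.card (ι → Fin c) := by rw [Set.ncard_univ, Nat.card_eq_fintype_card]
    _ = c ^ Fintype.card ι := by rw [Fintype.card_fun, Fintype.card_fin]
    _ = 2 ^ ((n - m) * Fintype.card ι) := by rw [hc, ← pow_mul]


lemma sum_negMulLog_le {β : Type*} {F : Finset β} {p : β → ℝ} (h0 : ∀ b ∈ F, 0 ≤ p b)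
    (K : ℕ) (hcard : F.card ≤ K) :
    ∑ b ∈ F, Real.negMulLog (p b) ≤
      Real.negMulLog (∑ b ∈ F, p b) + (∑ b ∈ F, p b) * Real.log K := by
  rcases F.eq_empty_or_nonempty with rfl | hne
  · simp
  · have hn : (0:ℝ) < F.card := by exact_mod_cast Finset.card_pos.2 hne
    set n : ℝ := (F.card : ℝ) with hn'
    set P : ℝ := ∑ b ∈ F, p b with hP
    have hP0 : 0 ≤ P := Finset.sum_nonneg h0
    have hjen : ∑ b ∈ F, (n⁻¹ : ℝ) • Real.negMulLog (p b) ≤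
        Real.negMulLog (∑ b ∈ F, (n⁻¹ : ℝ) • p b) := by
      apply Real.concaveOn_negMulLog.le_map_sum
      · intro i _; positivity
      · rw [Finset.sum_const, nsmul_eq_mul]; field_simp; exact hn'.symm
      · intro i hi; exact h0 i hi
    have hsmul : ∑ b ∈ F, (n⁻¹ : ℝ) • p b = P * n⁻¹ := by
      rw [← Finset.smul_sum]; simp [smul_eq_mul, mul_comm]; exact Or.inl rfl
    have hml : Real.negMulLog (P * n⁻¹) = n⁻¹ * Real.negMulLog P + P * (n⁻¹ * Real.log n) := by
      rw [Real.negMulLog_mul]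
      congr 1
      have : Real.negMulLog n⁻¹ = n⁻¹ * Real.log n := by
        rw [Real.negMulLog, Real.log_inv]; ring
      rw [this]
    have hkey : ∑ b ∈ F, Real.negMulLog (p b) ≤ Real.negMulLog P + P * Real.log n := by
      have h2 : (n⁻¹ : ℝ) * ∑ b ∈ F, Real.negMulLog (p b) ≤
          n⁻¹ * Real.negMulLog P + P * (n⁻¹ * Real.log n) := by
        calc (n⁻¹ : ℝ) * ∑ b ∈ F, Real.negMulLog (p b)
            = ∑ b ∈ F, (n⁻¹ : ℝ) • Real.negMulLog (p b) := by
              rw [Finset.smul_sum.symm]; simp [smul_eq_mul]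
          _ ≤ Real.negMulLog (∑ b ∈ F, (n⁻¹ : ℝ) • p b) := hjen
          _ = n⁻¹ * Real.negMulLog P + P * (n⁻¹ * Real.log n) := by rw [hsmul, hml]
      have h3 := mul_le_mul_of_nonneg_left h2 (le_of_lt hn)
      calc ∑ b ∈ F, Real.negMulLog (p b)
          = n * (n⁻¹ * ∑ b ∈ F, Real.negMulLog (p b)) := by field_simp
        _ ≤ n * (n⁻¹ * Real.negMulLog P + P * (n⁻¹ * Real.log n)) := h3
        _ = Real.negMulLog P + P * Real.log n := by field_simp
    refine hkey.trans ?_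
    have hlog : Real.log n ≤ Real.log K := by
      apply Real.log_le_log hn
      rw [hn']
      exact_mod_cast hcard
    gcongr
    


variable {β β' : Type*} [MeasurableSpace β] [MeasurableSingletonClass β]
  [MeasurableSpace β'] [MeasurableSingletonClass β']

lemma measure_eq_sum_atoms (m : Measure β) {S : Set β} (hmS : m Sᶜ = 0)
    {A : Set β} (hfin : (S ∩ A).Finite) : m A = ∑ b ∈ hfin.toFinset, m {b} := by
  have h1 : m A = m (A ∩ S) := by
    refine le_antisymm ?_ (measure_mono inter_subset_left)
    calc m A ≤ m (A ∩ S) + m (A \ S) := measure_le_inter_add_diff m A S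
      _ ≤ m (A ∩ S) + m Sᶜ := by gcongr; exact fun x hx => hx.2
      _ = m (A ∩ S) := by rw [hmS, add_zero]
  have h2 : A ∩ S = ⋃ b ∈ hfin.toFinset, {b} := by
    ext x; simp [Set.mem_iUnion, inter_comm, and_comm]
  rw [h1, h2, measure_biUnion_finset]
  · intro x _ y _ hxy
    simp [Function.onFun, Set.disjoint_singleton_left, hxy]
  · intro b _; exact measurableSet_singleton b

/-- Grouping: if `f` has fibers of size at most `K` on the support `S` of `m`, then
 entropy of `m` exceeds entropy of `m.map f` by at most `log₂ K`. -/
lemma pmfEntropy_le_map_add (m : Measure β) [IsProbabilityMeasure m] (f : β → β')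
    (hf : Measurable f) (S : Set β) (hS : S.Countable) (hmS : m Sᶜ = 0)
    (K : ℕ) (hK : 1 ≤ K)
    (hfib : ∀ t, (S ∩ f ⁻¹' {t}).Finite ∧ (S ∩ f ⁻¹' {t}).ncard ≤ K) :
    pmfEntropy m ≤ pmfEntropy (m.map f) +
      ENNReal.ofReal ((Real.log 2)⁻¹ * Real.log K) := by
  classical
  haveI : IsProbabilityMeasure (m.map f) := Measure.isProbabilityMeasure_map hf.aemeasurable
  set T : Set β' := f '' S with hT
  have hTc : T.Countable := hS.image f
  set g : β → ℝ≥0∞ := fun b => eTerm (m {b}) with hg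
  have hgS : ∀ b ∉ S, g b = 0 := by
    intro b hb
    have : m {b} = 0 := measure_mono_null (by simpa using hb) hmS
    rw [hg]; simp only; rw [this]; exact eTerm_zero
  have hm1 : ∀ b : β, m {b} ≤ 1 := fun b => prob_le_one
  -- Step 1 : regroup the entropy sum along fibers of f
  have step1 : pmfEntropy m = ∑' t : T, ∑ b ∈ (hfib t).1.toFinset, g b := by
    rw [pmfEntropy_eq]
    have e1 : ∀ b : β, g b = ∑' t : T, (if f b = (t : β') then g b else 0) := by
      intro b
      by_cases hb : b ∈ S
      · symm
        rw [tsum_eq_single (⟨f b, mem_image_of_mem f hb⟩ : T)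
          (fun t' ht' => if_neg fun h => ht' (Subtype.ext h.symm))]
        exact if_pos rfl
      · rw [hgS b hb]
        symm
        simp
    calc ∑' b : β, eTerm (m {b}) = ∑' b : β, ∑' t : T, (if f b = (t : β') then g b else 0) := by
          exact tsum_congr e1
      _ = ∑' t : T, ∑' b : β, (if f b = (t : β') then g b else 0) := ENNReal.tsum_comm
      _ = ∑' t : T, ∑ b ∈ (hfib t).1.toFinset, g b := by
          refine tsum_congr fun t => ?_
          rw [tsum_eq_sum (s := (hfib (t:β')).1.toFinset) ?_]
          · refine Finset.sum_congr rfl fun b hb => ?_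
            rw [Set.Finite.mem_toFinset] at hb
            have hfb : f b = (t:β') := hb.2
            rw [if_pos hfb]
          · intro b hb
            rw [Set.Finite.mem_toFinset] at hb
            split
            · rename_i hfb
              exact hgS b fun hbS => hb ⟨hbS, hfb⟩
            · rfl
  -- Step 2 : per-fiber bound
  have step2 : ∀ t : β', ∑ b ∈ (hfib t).1.toFinset, g b ≤
      eTerm (m.map f {t}) + (m.map f {t}) * ENNReal.ofReal ((Real.log 2)⁻¹ * Real.log K) := by
    intro t
    have hPt : m.map f {t} = ∑ b ∈ (hfib t).1.toFinset, m {b} := by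
      rw [Measure.map_apply hf (measurableSet_singleton t)]
      exact measure_eq_sum_atoms m hmS (hfib t).1
    set F := (hfib t).1.toFinset with hF
    have hcard : F.card ≤ K := by
      have h2 := (hfib t).2
      rwa [Set.ncard_eq_toFinset_card _ (hfib t).1] at h2
    set p : β → ℝ := fun b => (m {b}).toReal with hp
    have hp0 : ∀ b ∈ F, 0 ≤ p b := fun b _ => ENNReal.toReal_nonneg
    have hPsum : (m.map f {t}).toReal = ∑ b ∈ F, p b := by
      rw [hPt]
      exact ENNReal.toReal_sum fun b _ => (hm1 b).trans_lt ENNReal.one_lt_top |>.ne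
    have hreal := sum_negMulLog_le hp0 K hcard
    have c0 : (0:ℝ) ≤ (Real.log 2)⁻¹ := by positivity
    -- convert to ℝ≥0∞
    have lhs_eq : ∑ b ∈ F, g b =
        ENNReal.ofReal (∑ b ∈ F, (Real.log 2)⁻¹ * Real.negMulLog (p b)) := by
      rw [ENNReal.ofReal_sum_of_nonneg]
      · rfl
      · intro b hb
        have := Real.negMulLog_nonneg (hp0 b hb) ?_
        · positivity
        · rw [hp]; exact ENNReal.toReal_le_of_le_ofReal one_pos.le (by simpa using hm1 b)
    rw [lhs_eq]
    have hP1 : (m.map f {t}).toReal ≤ 1 := by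
      exact ENNReal.toReal_le_of_le_ofReal one_pos.le (by simpa using prob_le_one)
    have rhs_ge : ENNReal.ofReal ((Real.log 2)⁻¹ * Real.negMulLog ((m.map f {t}).toReal)
          + (m.map f {t}).toReal * ((Real.log 2)⁻¹ * Real.log K)) ≤
        eTerm (m.map f {t}) + (m.map f {t}) * ENNReal.ofReal ((Real.log 2)⁻¹ * Real.log K) := by
      rw [ENNReal.ofReal_add]
      · apply add_le_add le_rfl
        rw [ENNReal.ofReal_mul ENNReal.toReal_nonneg]
        gcongr
        exact ENNReal.ofReal_toReal_le
      · have := Real.negMulLog_nonneg (ENNReal.toReal_nonneg (a := m.map f {t})) hP1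
        positivity
      · have hlogK : (0:ℝ) ≤ Real.log K := Real.log_nonneg (by exact_mod_cast hK)
        positivity
    refine le_trans ?_ rhs_ge
    apply ENNReal.ofReal_le_ofReal
    calc ∑ b ∈ F, (Real.log 2)⁻¹ * Real.negMulLog (p b)
        = (Real.log 2)⁻¹ * ∑ b ∈ F, Real.negMulLog (p b) := by rw [Finset.mul_sum]
      _ ≤ (Real.log 2)⁻¹ * (Real.negMulLog (∑ b ∈ F, p b) + (∑ b ∈ F, p b) * Real.log K) := by
          gcongr
      _ = (Real.log 2)⁻¹ * Real.negMulLog ((m.map f {t}).toReal)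
          + (m.map f {t}).toReal * ((Real.log 2)⁻¹ * Real.log K) := by rw [hPsum]; ring
  -- Step 3 : sum the bounds over t
  rw [step1]
  calc ∑' t : T, ∑ b ∈ (hfib t).1.toFinset, g b
      ≤ ∑' t : T, (eTerm (m.map f {(t:β')}) +
          (m.map f {(t:β')}) * ENNReal.ofReal ((Real.log 2)⁻¹ * Real.log K)) :=
        ENNReal.tsum_le_tsum fun t => step2 t
    _ = (∑' t : T, eTerm (m.map f {(t:β')})) +
        (∑' t : T, m.map f {(t:β')}) * ENNReal.ofReal ((Real.log 2)⁻¹ * Real.log K) := by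
        rw [ENNReal.tsum_add, ENNReal.tsum_mul_right]
    _ ≤ pmfEntropy (m.map f) + 1 * ENNReal.ofReal ((Real.log 2)⁻¹ * Real.log K) := by
        gcongr
        · rw [pmfEntropy_eq, tsum_subtype T (fun t => eTerm (m.map f {t}))]
          exact ENNReal.tsum_le_tsum fun t => Set.indicator_le_self _ _ _
        · have hbi : ∑' t : T, m.map f {(t:β')} = m.map f (⋃ t ∈ T, {t}) := by
            rw [measure_biUnion hTc ?_ (fun b _ => measurableSet_singleton b)]
            intro x _ y _ hxy
            simp [Function.onFun, Set.disjoint_singleton_left, hxy]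
          rw [hbi]
          exact prob_le_one
    _ = pmfEntropy (m.map f) + ENNReal.ofReal ((Real.log 2)⁻¹ * Real.log K) := by rw [one_mul]


lemma measurable_eTerm {γ : Type*} [MeasurableSpace γ] {g : γ → ℝ≥0∞} (hg : Measurable g) :
    Measurable fun y => eTerm (g y) := by
  apply Measurable.ennreal_ofReal
  exact (Real.continuous_negMulLog.measurable.comp hg.ennreal_toReal).const_mul _

lemma lintegral_pmfEntropy_le {γ β : Type*} [MeasurableSpace γ] [MeasurableSpace β]
    [MeasurableSingletonClass β]
    (ρ : Measure γ) [IsProbabilityMeasure ρ] (κ : Kernel γ β) [IsMarkovKernel κ]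
    (S : Set β) (hS : S.Countable) (hsupp : ∀ y, ∀ b ∉ S, κ y {b} = 0)
    (m : Measure β) (hm : ∀ b, m {b} = ∫⁻ y, κ y {b} ∂ρ) :
    ∫⁻ y, pmfEntropy (κ y) ∂ρ ≤ pmfEntropy m := by
  haveI : Countable S := hS.to_subtype
  have hout : ∀ b ∉ S, m {b} = 0 := by
    intro b hb
    rw [hm b]
    simp [hsupp _ b hb]
  have hmeas : ∀ b : β, Measurable fun y => κ y {b} :=
    fun b => Kernel.measurable_coe κ (measurableSet_singleton b)
  have hrw : ∫⁻ y, pmfEntropy (κ y) ∂ρ = ∑' b : S, ∫⁻ y, eTerm (κ y {(b:β)}) ∂ρ := by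
    rw [← lintegral_tsum (fun b : S => (measurable_eTerm (hmeas (b:β))).aemeasurable)]
    exact lintegral_congr fun y => pmfEntropy_eq_tsum_subtype (κ y) S (hsupp y)
  rw [hrw, pmfEntropy_eq_tsum_subtype m S hout]
  refine ENNReal.tsum_le_tsum fun b => ?_
  -- single-atom Jensen step
  set q : γ → ℝ := fun y => (κ y ({(b:β)} : Set β)).toReal with hq
  have hqmeas : Measurable q := (hmeas (b:β)).ennreal_toReal
  have hq01 : ∀ y, q y ∈ Set.Icc (0:ℝ) 1 := by
    intro y
    refine ⟨ENNReal.toReal_nonneg, ?_⟩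
    exact ENNReal.toReal_le_of_le_ofReal one_pos.le (by simpa using prob_le_one (μ := κ y))
  have hqint : Integrable q ρ := by
    refine ⟨hqmeas.aestronglyMeasurable, ?_⟩
    apply HasFiniteIntegral.of_bounded (C := 1)
    exact Eventually.of_forall fun y => by
      rw [Real.norm_eq_abs, abs_of_nonneg (hq01 y).1]; exact (hq01 y).2
  have hgint : Integrable (fun y => Real.negMulLog (q y)) ρ := by
    refine ⟨(Real.continuous_negMulLog.measurable.comp hqmeas).aestronglyMeasurable, ?_⟩
    apply HasFiniteIntegral.of_bounded (C := 1)
    refine Eventually.of_forall fun y => ?_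
    rw [Real.norm_eq_abs, abs_of_nonneg (Real.negMulLog_nonneg (hq01 y).1 (hq01 y).2)]
    exact negMulLog_le_one (hq01 y).1 (hq01 y).2
  have hjensen : ∫ y, Real.negMulLog (q y) ∂ρ ≤ Real.negMulLog (∫ y, q y ∂ρ) := by
    refine ConcaveOn.le_map_integral (s := Set.Icc (0:ℝ) 1) ?_ ?_ ?_ ?_ hqint hgint
    · exact Real.concaveOn_negMulLog.subset Set.Icc_subset_Ici_self (convex_Icc 0 1)
    · exact Real.continuous_negMulLog.continuousOn
    · exact isClosed_Icc
    · exact Eventually.of_forall hq01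
  have hint_q : ∫ y, q y ∂ρ = (m {(b:β)}).toReal := by
    rw [hq]
    simp only
    rw [integral_toReal (hmeas (b:β)).aemeasurable
      (Eventually.of_forall fun y => (prob_le_one).trans_lt ENNReal.one_lt_top), hm]
  have c0 : (0:ℝ) ≤ (Real.log 2)⁻¹ := by positivity
  calc ∫⁻ y, eTerm (κ y {(b:β)}) ∂ρ
      = ENNReal.ofReal (∫ y, (Real.log 2)⁻¹ * Real.negMulLog (q y) ∂ρ) := by
        rw [ofReal_integral_eq_lintegral_ofReal]
        · rfl
        · exact hgint.const_mul _
        · exact Eventually.of_forall fun y => by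
            have := Real.negMulLog_nonneg (hq01 y).1 (hq01 y).2
            positivity
    _ ≤ eTerm (m {(b:β)}) := by
        rw [MeasureTheory.integral_const_mul]
        apply ENNReal.ofReal_le_ofReal
        rw [← hint_q]
        exact mul_le_mul_of_nonneg_left hjensen c0


lemma compProd_map_right {γ β β' : Type*} [MeasurableSpace γ] [MeasurableSpace β]
    [MeasurableSpace β'] (ρ : Measure γ) [SFinite ρ] (κ : Kernel γ β) [IsSFiniteKernel κ]
    {f : β → β'} (hf : Measurable f) :
    (ρ ⊗ₘ κ).map (Prod.map id f) = ρ ⊗ₘ (κ.map f) := by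
  haveI : IsSFiniteKernel (κ.map f) := Kernel.IsSFiniteKernel.map κ f
  ext s hs
  rw [Measure.map_apply (measurable_id.prodMap hf) hs, Measure.compProd_apply hs,
    Measure.compProd_apply ((measurable_id.prodMap hf) hs)]
  refine lintegral_congr fun y => ?_
  rw [Kernel.map_apply' κ hf _ (measurable_prodMk_left hs)]
  rfl

/-- disintegration of a joint law through `condDistrib`. -/
lemma map_pair_eq_compProd_condDistrib {α γ Ω : Type*} [MeasurableSpace α] [MeasurableSpace γ]
    [MeasurableSpace Ω] [StandardBorelSpace Ω] [Nonempty Ω]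
    (μ : Measure α) [IsFiniteMeasure μ] {X : α → Ω} {Y : α → γ}
    (hX : Measurable X) (hY : Measurable Y) :
    μ.map (fun a => (Y a, X a)) = (μ.map Y) ⊗ₘ condDistrib X Y μ := by
  rw [condDistrib_def]
  haveI : IsFiniteMeasure (μ.map (fun a => (Y a, X a))) :=
    Measure.isFiniteMeasure_map μ _
  rw [← Measure.fst_map_prodMk (X := Y) hX]
  exact ((μ.map (fun a => (Y a, X a))).disintegrate _).symm


end AuxEntropy

/-- **Relative information loss and information dimension.**  Let `X` be an
`N`-dimensional RV with positive information dimension `d(X) = dX`.  If the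
conditional information dimension `d(X|Y=y) = D y` exists and is finite for
`P_Y`-almost every `y`, then the relative information loss exists and equals
`l(X→Y) = d(X|Y)/d(X)`, where `d(X|Y) = ∫ d(X|Y=y) dP_Y(y)`. -/
theorem relLoss_eq_condInfoDim_div_infoDim
    {α ι γ : Type*} [MeasurableSpace α] [Fintype ι] [MeasurableSpace γ]
    (μ : Measure α) [IsProbabilityMeasure μ]
    (X : α → ι → ℝ) (g : (ι → ℝ) → γ)
    (hX : Measurable X) (hg : Measurable g)
    (dX : ℝ) (hdXpos : 0 < dX)
    (hdX : Tendsto (fun n : ℕ => (entQ μ X n).toReal / n) atTop (𝓝 dX))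
    (D : γ → ℝ)
    (hD : ∀ᵐ y ∂(μ.map fun a => g (X a)),
      Tendsto (fun n : ℕ =>
          (entQM (condDistrib X (fun a => g (X a)) μ y) n).toReal / n) atTop (𝓝 (D y))) :
    Tendsto (fun n : ℕ => relLossSeq μ X (fun a => g (X a)) n) atTop
      (𝓝 ((∫ y, D y ∂(μ.map fun a => g (X a))) / dX)) := by
  classical
  set Y : α → γ := fun a => g (X a) with hYdef
  have hY : Measurable Y := hg.comp hX
  set ρ : Measure γ := μ.map Y with hρ
  haveI : IsProbabilityMeasure ρ := Measure.isProbabilityMeasure_map hY.aemeasurable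
  set κ : Kernel γ (ι → ℝ) := condDistrib X Y μ with hκ
  have hq : ∀ n : ℕ, Measurable (quant (ι := ι) n) := measurable_quant
  -- joint laws
  have hpair : μ.map (fun a => (Y a, X a)) = ρ ⊗ₘ κ :=
    map_pair_eq_compProd_condDistrib μ hX hY
  haveI hMK : ∀ n : ℕ, IsMarkovKernel (κ.map (quant n)) :=
    fun n => Kernel.IsMarkovKernel.map κ (hq n)
  have hjoint : ∀ n : ℕ, μ.map (fun a => (Y a, quant n (X a))) = ρ ⊗ₘ (κ.map (quant n)) := by
    intro n
    have h1 : (fun a => (Y a, quant n (X a)))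
        = (Prod.map id (quant n)) ∘ (fun a => (Y a, X a)) := rfl
    rw [h1, ← Measure.map_map (measurable_id.prodMap (hq n)) (hY.prodMk hX), hpair,
      compProd_map_right ρ κ (hq n)]
  have hcd : ∀ n : ℕ, ∀ᵐ y ∂ρ,
      (κ.map (quant n)) y = condDistrib (fun a => quant n (X a)) Y μ y := fun n =>
    (condDistrib_ae_eq_of_measure_eq_compProd_of_measurable hY ((hq n).comp hX) (hjoint n)).symm
  -- per-y quantized entropies
  set H : ℕ → γ → ℝ≥0∞ := fun n y => pmfEntropy ((κ y).map (quant n)) with hH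
  have hCE : ∀ n : ℕ, condEntQ μ X Y n = ∫⁻ y, H n y ∂ρ := by
    intro n
    simp only [condEntQ, condEnt]
    refine lintegral_congr_ae ((hcd n).mono fun y hy => ?_)
    simp only [hH]
    rw [← hy, Kernel.map_apply κ (hq n)]
  have hsuppH : ∀ n y, ∀ b ∉ grid ι n, ((κ y).map (quant n)) {b} = 0 := by
    intro n y b hb
    rw [Measure.map_apply (hq n) (measurableSet_singleton b)]
    have h0 : quant n ⁻¹' ({b} : Set (ι → ℝ)) = ∅ := by
      ext x
      simp only [Set.mem_preimage, Set.mem_singleton_iff, Set.mem_empty_iff_false, iff_false]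
      intro hx
      exact hb (hx ▸ quant_mem_grid n x)
    rw [h0, measure_empty]
  have hatom : ∀ (n : ℕ) (b : ι → ℝ), (μ.map fun a => quant n (X a)) {b}
      = ∫⁻ y, ((κ y).map (quant n)) {b} ∂ρ := by
    intro n b
    have h1 : (μ.map fun a => quant n (X a))
        = (μ.map (fun a => (Y a, quant n (X a)))).snd := (Measure.snd_map_prodMk hY).symm
    rw [h1, hjoint n, Measure.snd_apply (measurableSet_singleton b),
      Measure.compProd_apply (measurable_snd (measurableSet_singleton b))]
    refine lintegral_congr fun y => ?_
    rw [Kernel.map_apply κ (hq n)]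
    rfl
  have hfinH : ∀ n : ℕ, ∫⁻ y, H n y ∂ρ ≤ entQ μ X n := by
    intro n
    haveI : IsProbabilityMeasure (μ.map fun a => quant n (X a)) :=
      Measure.isProbabilityMeasure_map ((hq n).comp hX).aemeasurable
    have hle := lintegral_pmfEntropy_le ρ (κ.map (quant n)) (grid ι n) (countable_grid n)
      (fun y b hb => by rw [Kernel.map_apply κ (hq n)]; exact hsuppH n y b hb)
      (μ.map fun a => quant n (X a))
      (fun b => by
        rw [hatom n b]
        exact lintegral_congr fun y => by rw [Kernel.map_apply κ (hq n)])
    refine le_trans (le_of_eq ?_) hle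
    exact lintegral_congr fun y => by rw [Kernel.map_apply κ (hq n)]
  have hgrow : ∀ m n : ℕ, m ≤ n → ∀ y,
      H n y ≤ H m y + (((n - m) * Fintype.card ι : ℕ) : ℝ≥0∞) := by
    intro m n hmn y
    haveI : IsProbabilityMeasure (κ y) := IsMarkovKernel.isProbabilityMeasure y
    haveI : IsProbabilityMeasure ((κ y).map (quant n)) :=
      Measure.isProbabilityMeasure_map (hq n).aemeasurable
    have hgm : MeasurableSet (grid ι n) := (countable_grid n).measurableSet
    have hmS : ((κ y).map (quant n)) (grid ι n)ᶜ = 0 := by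
      rw [Measure.map_apply (hq n) hgm.compl]
      have h0 : quant n ⁻¹' (grid ι n)ᶜ = ∅ := by
        ext x
        simp only [Set.mem_preimage, Set.mem_compl_iff, Set.mem_empty_iff_false, iff_false,
          not_not]
        exact quant_mem_grid n x
      rw [h0, measure_empty]
    have hb := pmfEntropy_le_map_add ((κ y).map (quant n)) (coarse ι n m)
      (measurable_coarse n m) (grid ι n) (countable_grid n) hmS
      (2 ^ ((n - m) * Fintype.card ι)) Nat.one_le_two_pow
      (fun t => grid_fiber_finite_card n m t)
    rw [Measure.map_map (measurable_coarse n m) (hq n), coarse_comp_quant hmn] at hb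
    refine hb.trans ?_
    gcongr
    have hlog : (Real.log 2)⁻¹ * Real.log ((2 ^ ((n - m) * Fintype.card ι) : ℕ) : ℝ)
        = (((n - m) * Fintype.card ι : ℕ) : ℝ) := by
      push_cast
      rw [Real.log_pow]
      have : Real.log 2 ≠ 0 := by positivity
      field_simp
      exact Nat.cast_mul _ _
    rw [hlog, ENNReal.ofReal_natCast]
  have hHmeas : ∀ n : ℕ, Measurable (H n) := by
    intro n
    haveI : Countable (grid ι n) := (countable_grid n).to_subtype
    have hrw : H n = fun y => ∑' b : grid ι n, eTerm (κ y (quant n ⁻¹' {(b : ι → ℝ)})) := by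
      funext y
      rw [hH]
      simp only
      rw [pmfEntropy_eq_tsum_subtype _ (grid ι n) (hsuppH n y)]
      exact tsum_congr fun b => by
        rw [Measure.map_apply (hq n) (measurableSet_singleton _)]
    rw [hrw]
    exact Measurable.ennreal_tsum fun b =>
      measurable_eTerm (Kernel.measurable_coe κ ((hq n) (measurableSet_singleton _)))
  -- choose n₀ with finite entropy
  obtain ⟨n₀, hn₀pos, hn₀1⟩ : ∃ n₀ : ℕ, 0 < (entQ μ X n₀).toReal / n₀ ∧ 1 ≤ n₀ := by
    have hev : ∀ᶠ n : ℕ in atTop, 0 < (entQ μ X n).toReal / n :=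
      hdX.eventually (eventually_gt_nhds hdXpos)
    obtain ⟨n₀, h1, h2⟩ := (hev.and (eventually_ge_atTop 1)).exists
    exact ⟨n₀, h1, h2⟩
  have hfin₀ : entQ μ X n₀ ≠ ⊤ := by
    intro h
    rw [h] at hn₀pos
    simp at hn₀pos
  have hFfin : ∫⁻ y, H n₀ y ∂ρ ≠ ⊤ := ne_top_of_le_ne_top hfin₀ (hfinH n₀)
  set bound : γ → ℝ≥0∞ := fun y => H n₀ y + (Fintype.card ι : ℝ≥0∞) with hbdef
  have hboundfin : ∫⁻ y, bound y ∂ρ ≠ ⊤ := by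
    rw [hbdef]
    simp only
    rw [lintegral_add_right _ measurable_const, lintegral_const, measure_univ, mul_one]
    exact ENNReal.add_ne_top.2 ⟨hFfin, ENNReal.natCast_ne_top _⟩
  have hdom : ∀ n : ℕ, n₀ + 1 ≤ n → ∀ y, H n y / n ≤ bound y := by
    intro n hn y
    have hn0 : (n : ℝ≥0∞) ≠ 0 := by
      exact_mod_cast Nat.cast_ne_zero.mpr (by omega)
    have h1 : H n y / n ≤ (H n₀ y + (((n - n₀) * Fintype.card ι : ℕ) : ℝ≥0∞)) / n :=
      ENNReal.div_le_div_right (hgrow n₀ n (by omega) y) _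
    refine h1.trans ?_
    rw [ENNReal.add_div]
    have h2 : H n₀ y / n ≤ H n₀ y := by
      calc H n₀ y / n ≤ H n₀ y / 1 :=
            ENNReal.div_le_div_left (by exact_mod_cast Nat.one_le_cast.mpr (by omega)) _
        _ = H n₀ y := by rw [div_one]
    have h3 : (((n - n₀) * Fintype.card ι : ℕ) : ℝ≥0∞) / n ≤ (Fintype.card ι : ℝ≥0∞) := by
      have hle : (((n - n₀) * Fintype.card ι : ℕ) : ℝ≥0∞)
          ≤ ((n * Fintype.card ι : ℕ) : ℝ≥0∞) := by
        exact_mod_cast Nat.cast_le.mpr (Nat.mul_le_mul_right _ (by omega))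
      refine (ENNReal.div_le_div_right hle _).trans ?_
      rw [Nat.cast_mul, mul_comm, mul_div_assoc,
        ENNReal.div_self hn0 (ENNReal.natCast_ne_top n), mul_one]
    exact add_le_add h2 h3
  -- a.e. pointwise convergence in ℝ≥0∞
  have hHn₀fin : ∀ᵐ y ∂ρ, H n₀ y ≠ ⊤ :=
    (ae_lt_top (hHmeas n₀) hFfin).mono fun y hy => hy.ne
  have hptlim : ∀ᵐ y ∂ρ,
      Tendsto (fun n : ℕ => H n y / n) atTop (𝓝 (ENNReal.ofReal (D y))) := by
    filter_upwards [hD, hHn₀fin] with y hy hfiny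
    have hfin : ∀ n, n₀ ≤ n → H n y ≠ ⊤ := fun n hn =>
      ne_top_of_le_ne_top (ENNReal.add_ne_top.2 ⟨hfiny, ENNReal.natCast_ne_top _⟩)
        (hgrow n₀ n hn y)
    have heq : ∀ᶠ n : ℕ in atTop,
        ENNReal.ofReal ((H n y).toReal / n) = H n y / n := by
      filter_upwards [eventually_ge_atTop (max n₀ 1)] with n hn
      have h1 : H n y ≠ ⊤ := hfin n (le_trans (le_max_left _ _) hn)
      have h2 : (0:ℝ) < n := by
        have : 1 ≤ n := le_trans (le_max_right _ _) hn
        exact_mod_cast Nat.lt_of_lt_of_le Nat.zero_lt_one this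
      rw [ENNReal.ofReal_div_of_pos h2, ENNReal.ofReal_toReal h1, ENNReal.ofReal_natCast]
    exact (ENNReal.tendsto_ofReal hy).congr' heq
  -- dominated convergence
  set I : ℝ≥0∞ := ∫⁻ y, ENNReal.ofReal (D y) ∂ρ with hI
  have hFn : ∀ n : ℕ, 1 ≤ n → ∫⁻ y, H n y / n ∂ρ = (∫⁻ y, H n y ∂ρ) / n := by
    intro n hn
    simp only [div_eq_mul_inv]
    exact lintegral_mul_const' _ _ (by
      simp only [ne_eq, ENNReal.inv_eq_top]
      exact_mod_cast Nat.cast_ne_zero.mpr (by omega))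
  have hDCT : Tendsto (fun n : ℕ => (∫⁻ y, H n y ∂ρ) / n) atTop (𝓝 I) := by
    rw [← Filter.tendsto_add_atTop_iff_nat (n₀ + 1)]
    have h1 : Tendsto (fun k : ℕ => ∫⁻ y, H (k + (n₀ + 1)) y / (k + (n₀ + 1) : ℕ) ∂ρ)
        atTop (𝓝 I) := by
      refine tendsto_lintegral_of_dominated_convergence bound
        (fun k => (hHmeas _).div measurable_const) ?_ hboundfin ?_
      · intro k
        exact Eventually.of_forall (hdom (k + (n₀ + 1)) (by omega))
      · filter_upwards [hptlim] with y hy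
        exact (Filter.tendsto_add_atTop_iff_nat (n₀ + 1)).2 hy
    refine h1.congr fun k => ?_
    exact hFn _ (by omega)
  have hIne : I ≠ ⊤ := by
    have hle : I ≤ ∫⁻ y, bound y ∂ρ := by
      refine lintegral_mono_ae ?_
      filter_upwards [hptlim] with y hy
      exact le_of_tendsto hy ((eventually_ge_atTop (n₀ + 1)).mono fun n hn => hdom n hn y)
    exact ne_top_of_le_ne_top hboundfin hle
  -- numerator convergence (real)
  have hnum : Tendsto (fun n : ℕ => (condEntQ μ X Y n).toReal / n) atTop (𝓝 I.toReal) := by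
    have h2 : Tendsto (fun n : ℕ => ((∫⁻ y, H n y ∂ρ) / n).toReal) atTop (𝓝 I.toReal) :=
      (ENNReal.tendsto_toReal hIne).comp hDCT
    refine h2.congr fun n => ?_
    rw [ENNReal.toReal_div, hCE n]; simp
  -- the integral of D
  have hDmeas : AEMeasurable D ρ := by
    refine aemeasurable_of_tendsto_metrizable_ae atTop (fun n => ?_) hD
    exact ((hHmeas n).ennreal_toReal.div_const _).aemeasurable
  have hDnn : 0 ≤ᵐ[ρ] D := by
    filter_upwards [hD] with y hy
    refine ge_of_tendsto' hy fun n => ?_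
    positivity
  have hInt : ∫ y, D y ∂ρ = I.toReal := by
    rw [hI, integral_eq_lintegral_of_nonneg_ae hDnn hDmeas.aestronglyMeasurable]
  -- conclusion
  rw [hInt]
  have hdiv : Tendsto (fun n : ℕ =>
      ((condEntQ μ X Y n).toReal / n) / ((entQ μ X n).toReal / n)) atTop
      (𝓝 (I.toReal / dX)) := hnum.div hdX hdXpos.ne'
  refine hdiv.congr' ?_
  filter_upwards [eventually_ge_atTop 1] with n hn
  have hne : (n : ℝ) ≠ 0 := by
    exact_mod_cast Nat.cast_ne_zero.mpr (by omega)
  simp only [relLossSeq]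
  rcases eq_or_ne ((entQ μ X n).toReal) 0 with hb | hb
  · rw [hb]
    simp
  · field_simp
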